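/- Let Ω be an open bounded convex subset of R^n whose centroid is the origin and whose inertia tensor is the standard one (Q_Ω = x_1^2 + ... + x_n^2, i.e., ∫_Ω x_i x_j dvol is a fixed multiple of δ_{ij}). Then there is a constant K = K(n) > 1 depending only on n such that K^{-1}·[-1,1]^n ⊆ Ω ⊆ K·[-1,1]^n. -/

import Mathlib

open MeasureTheory

namespace UniformBoxAux
open Bornology Metric Set Pointwise
open scoped RealInnerProductSpace

variable {n : ℕ} {Ω : Set (EuclideanSpace ℝ (Fin n))}

lemma integrableOn_of_cont {F : Type*} [NormedAddCommGroup F] [NormedSpace ℝ F]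
    (ho : IsOpen Ω) (hb : IsBounded Ω) {f : EuclideanSpace ℝ (Fin n) → F}
    (hf : Continuous f) : IntegrableOn f Ω volume := by
  obtain ⟨C, hC⟩ := hb.isCompact_closure.exists_bound_of_continuousOn hf.continuousOn
  exact Measure.integrableOn_of_bounded hb.measure_lt_top.ne hf.aestronglyMeasurable
    ((ae_restrict_iff' ho.measurableSet).2 (ae_of_all _ fun x hx => hC x (subset_closure hx)))

lemma integral_inner_eq_zero (ho : IsOpen Ω) (hb : IsBounded Ω)
    (h0 : (∫ x in Ω, x ∂volume) = 0) (u : EuclideanSpace ℝ (Fin n)) :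
    ∫ x in Ω, ⟪x, u⟫ ∂volume = 0 := by
  have hi : IntegrableOn (fun x : EuclideanSpace ℝ (Fin n) => x) Ω volume :=
    integrableOn_of_cont ho hb continuous_id
  have h := (innerSL ℝ u).integral_comp_comm hi
  simp only [innerSL_apply_apply] at h
  calc ∫ x in Ω, ⟪x, u⟫ ∂volume = ∫ x in Ω, ⟪u, x⟫ ∂volume := by
        simp_rw [real_inner_comm]
    _ = ⟪u, ∫ x in Ω, x ∂volume⟫ := h
    _ = 0 := by rw [h0, inner_zero_right]

lemma integral_inner_sq (ho : IsOpen Ω) (hb : IsBounded Ω)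
    (h2 : ∀ i j : Fin n, (∫ x in Ω, x i * x j ∂volume) = if i = j then 1 else 0)
    {u : EuclideanSpace ℝ (Fin n)} (hu : ‖u‖ = 1) :
    ∫ x in Ω, ⟪x, u⟫ ^ 2 ∂volume = 1 := by
  have hcont : ∀ i : Fin n, Continuous fun x : EuclideanSpace ℝ (Fin n) => x i :=
    fun i => (EuclideanSpace.proj i).continuous
  have key : ∀ x : EuclideanSpace ℝ (Fin n),
      ⟪x, u⟫ ^ 2 = ∑ i : Fin n, ∑ j : Fin n, u i * u j * (x i * x j) := by
    intro x
    rw [PiLp.inner_apply]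
    simp only [RCLike.inner_apply, starRingEnd_apply, star_trivial]
    rw [sq, Finset.sum_mul_sum]
    exact Finset.sum_congr rfl fun i _ => Finset.sum_congr rfl fun j _ => by ring
  simp_rw [key]
  have hint : ∀ i j : Fin n,
      IntegrableOn (fun x : EuclideanSpace ℝ (Fin n) => u i * u j * (x i * x j)) Ω volume :=
    fun i j => integrableOn_of_cont ho hb (continuous_const.mul ((hcont i).mul (hcont j)))
  rw [integral_finset_sum _ fun i _ => integrable_finset_sum _ fun j _ => hint i j]
  have hswap : ∀ i : Fin n, (∫ x in Ω, ∑ j : Fin n, u i * u j * (x i * x j) ∂volume)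
      = ∑ j : Fin n, ∫ x in Ω, u i * u j * (x i * x j) ∂volume :=
    fun i => integral_finset_sum _ fun j _ => hint i j
  simp_rw [hswap, integral_const_mul, h2]
  simp only [mul_ite, mul_one, mul_zero, Finset.sum_ite_eq, Finset.mem_univ, if_true]
  have h := real_inner_self_eq_norm_mul_norm (x := u)
  rw [PiLp.inner_apply] at h
  simp only [RCLike.inner_apply, starRingEnd_apply, star_trivial] at h
  rw [h, hu, mul_one]

/-- Two-sided moment bound: if `⟪·,u⟫ ≤ a` and `≥ -b` on `Ω`, then `1 ≤ a * b * |Ω|`. -/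
lemma moment_lower (ho : IsOpen Ω) (hb : IsBounded Ω) {u : EuclideanSpace ℝ (Fin n)}
    (hmean : ∫ x in Ω, ⟪x, u⟫ ∂volume = 0) (hsq : ∫ x in Ω, ⟪x, u⟫ ^ 2 ∂volume = 1)
    {a b : ℝ} (ha : ∀ x ∈ Ω, ⟪x, u⟫ ≤ a) (hbl : ∀ x ∈ Ω, -b ≤ ⟪x, u⟫) :
    1 ≤ a * b * (volume Ω).toReal := by
  have hgi : IntegrableOn (fun x => ⟪x, u⟫) Ω volume :=
    integrableOn_of_cont ho hb (continuous_id.inner continuous_const)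
  have hg2i : IntegrableOn (fun x => ⟪x, u⟫ ^ 2) Ω volume :=
    integrableOn_of_cont ho hb ((continuous_id.inner continuous_const).pow 2)
  have hmono : ∫ x in Ω, ⟪x, u⟫ ^ 2 ∂volume
      ≤ ∫ x in Ω, (a * b + (a - b) * ⟪x, u⟫) ∂volume := by
    refine setIntegral_mono_on hg2i ?_ ho.measurableSet ?_
    · exact (integrableOn_const hb.measure_lt_top.ne).add (hgi.const_mul _)
    · intro x hx
      have h1 := ha x hx
      have h2 := hbl x hx
      nlinarith
  rw [hsq, integral_add (show IntegrableOn (fun _ => a * b) Ω volume from integrableOn_const hb.measure_lt_top.ne) (hgi.const_mul _),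
    setIntegral_const, integral_const_mul, hmean, mul_zero, add_zero, smul_eq_mul, measureReal_def] at hmono
  linarith

/-- Cone/homothety bound: `|Ω| * a ^ 2 ≤ 16 * 3 ^ n`. -/
lemma cone_bound (ho : IsOpen Ω) (hb : IsBounded Ω) (hconv : Convex ℝ Ω)
    {u : EuclideanSpace ℝ (Fin n)}
    (hsq : ∫ x in Ω, ⟪x, u⟫ ^ 2 ∂volume = 1)
    {a : ℝ} (hapos : 0 < a) {p : EuclideanSpace ℝ (Fin n)} (hp : p ∈ Ω)
    (hp7 : 7 / 8 * a < ⟪p, u⟫) (hlow : ∀ x ∈ Ω, -a ≤ ⟪x, u⟫) :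
    (volume Ω).toReal * a ^ 2 ≤ 16 * 3 ^ n := by
  set A : Set (EuclideanSpace ℝ (Fin n)) := ((2:ℝ)/3) • p +ᵥ (((1:ℝ)/3) • Ω) with hA_def
  have hmem : ∀ y, y ∈ A ↔ ∃ x ∈ Ω, ((2:ℝ)/3) • p + ((1:ℝ)/3) • x = y := by
    intro y; simp [hA_def, Set.mem_vadd_set, Set.mem_smul_set, vadd_eq_add]
  have hAsub : A ⊆ Ω := by
    intro y hy
    obtain ⟨x, hx, rfl⟩ := (hmem y).1 hy
    exact hconv hp hx (by norm_num) (by norm_num) (by norm_num)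
  have hAopen : IsOpen A := (ho.smul₀ (by norm_num : (1/3:ℝ) ≠ 0)).vadd _
  have hvol : volume A = ENNReal.ofReal ((1/3:ℝ)^n) * volume Ω := by
    rw [hA_def, measure_vadd, Measure.addHaar_smul, finrank_euclideanSpace_fin,
      abs_of_nonneg (by positivity : (0:ℝ) ≤ (1/3:ℝ)^n)]
  have hAr : (volume A).toReal = (1/3:ℝ)^n * (volume Ω).toReal := by
    rw [hvol, ENNReal.toReal_mul, ENNReal.toReal_ofReal (by positivity)]
  have hlowA : ∀ y ∈ A, a / 4 ≤ ⟪y, u⟫ := by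
    intro y hy
    obtain ⟨x, hx, rfl⟩ := (hmem y).1 hy
    have h1 := hlow x hx
    rw [inner_add_left, real_inner_smul_left, real_inner_smul_left]
    nlinarith
  have hg2i : IntegrableOn (fun x => ⟪x, u⟫ ^ 2) Ω volume :=
    integrableOn_of_cont ho hb ((continuous_id.inner continuous_const).pow 2)
  have hAfin : volume A ≠ ⊤ := ((hb.subset hAsub).measure_lt_top).ne
  have step1 : (a / 4) ^ 2 * (volume A).toReal ≤ ∫ y in A, ⟪y, u⟫ ^ 2 ∂volume := by
    refine setIntegral_ge_of_const_le_real hAopen.measurableSet hAfin ?_ (hg2i.mono_set hAsub)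
    intro y hy
    have := hlowA y hy
    nlinarith
  have step2 : ∫ y in A, ⟪y, u⟫ ^ 2 ∂volume ≤ ∫ y in Ω, ⟪y, u⟫ ^ 2 ∂volume :=
    setIntegral_mono_set hg2i (ae_of_all _ fun y => sq_nonneg _) hAsub.eventuallyLE
  rw [hsq] at step2
  rw [hAr] at step1
  have h3 : (0:ℝ) < (3:ℝ)^n := by positivity
  have h13 : ((1/3:ℝ))^n = ((3:ℝ)^n)⁻¹ := by rw [one_div, inv_pow]
  rw [h13] at step1
  have hVr : (0:ℝ) ≤ (volume Ω).toReal := ENNReal.toReal_nonneg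
  have hchain : (a/4)^2 * (((3:ℝ)^n)⁻¹ * (volume Ω).toReal) ≤ 1 := le_trans step1 step2
  calc (volume Ω).toReal * a ^ 2
      = (a/4)^2 * (((3:ℝ)^n)⁻¹ * (volume Ω).toReal) * (3:ℝ)^n * 16 := by
        field_simp; ring
    _ ≤ 1 * (3:ℝ)^n * 16 := by nlinarith
    _ = 16 * 3 ^ n := by ring

end UniformBoxAux

open Bornology Metric Set Pointwise
open scoped RealInnerProductSpace

set_option maxHeartbeats 1000000 in
/-- **Uniform box estimate (John's theorem normalization).** There is a constant
`K = K(n) > 1` depending only on the dimension such that every bounded open convex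
`Ω ⊂ ℝ^n` with centroid at the origin and standard (isotropic) inertia tensor
(`∫_Ω x_i x_j dvol = δ_{ij}`) satisfies `K⁻¹·[-1,1]^n ⊆ Ω ⊆ K·[-1,1]^n`. -/
theorem uniform_box_estimate (n : ℕ) :
    ∃ K : ℝ, 1 < K ∧
      ∀ Ω : Set (EuclideanSpace ℝ (Fin n)),
        IsOpen Ω → Bornology.IsBounded Ω → Convex ℝ Ω → Ω.Nonempty →
        (∫ x in Ω, x ∂volume) = 0 →
        (∀ i j : Fin n, (∫ x in Ω, x i * x j ∂volume) = if i = j then 1 else 0) →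
        ((∀ x : EuclideanSpace ℝ (Fin n), (∀ i, |x i| ≤ K⁻¹) → x ∈ Ω) ∧
          (∀ x ∈ Ω, ∀ i, |x i| ≤ K)) := by
  classical
  rcases Nat.eq_zero_or_pos n with hn | hn
  · subst hn
    refine ⟨2, one_lt_two, ?_⟩
    intro Ω _ _ _ hne _ _
    refine ⟨fun x _ => ?_, fun x _ i => i.elim0⟩
    obtain ⟨y, hy⟩ := hne
    have hxy : x = y := by ext i; exact i.elim0
    rwa [hxy]
  -- main case `n ≥ 1`
  haveI : Nonempty (Fin n) := ⟨⟨0, hn⟩⟩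
  haveI : Nontrivial (EuclideanSpace ℝ (Fin n)) := by
    refine ⟨⟨EuclideanSpace.single ⟨0, hn⟩ 1, 0, fun h => ?_⟩⟩
    have := congrArg (fun z : EuclideanSpace ℝ (Fin n) => z ⟨0, hn⟩) h
    simp [EuclideanSpace.single_apply] at this
  set s3 : ℝ := 4 * 3 ^ n with hs3_def
  have hs3 : (0:ℝ) < s3 := by positivity
  have hs3ge : (4:ℝ) ≤ s3 := by
    have h1 : (1:ℝ) ≤ 3^n := by
      calc (1:ℝ) = 1^n := (one_pow n).symm
        _ ≤ 3^n := pow_le_pow_left₀ (by norm_num) (by norm_num) n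
    nlinarith
  set ω : ℝ := (volume (ball (0 : EuclideanSpace ℝ (Fin n)) 1)).toReal with hω_def
  have hωpos : 0 < ω :=
    ENNReal.toReal_pos (measure_ball_pos volume 0 one_pos).ne' measure_ball_lt_top.ne
  set w0 : ℝ := min 1 (ω / s3 ^ n) with hw0_def
  set w1 : ℝ := max 1 (s3 ^ n * ω) with hw1_def
  have hw0pos : 0 < w0 := lt_min one_pos (by positivity)
  have hw0le : w0 ≤ 1 := min_le_left _ _
  have hw1ge : (1:ℝ) ≤ w1 := le_max_left _ _
  have hw1pos : (0:ℝ) < w1 := lt_of_lt_of_le one_pos hw1ge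
  set K : ℝ := 2 * (s3 / w0 + s3 * w1 * (n + 1)) with hK_def
  have hdiv4 : (4:ℝ) ≤ s3 / w0 := by
    have h := div_le_div_of_nonneg_left hs3.le hw0pos hw0le
    rw [div_one] at h
    linarith
  have hterm2 : (0:ℝ) < s3 * w1 * (n + 1) := by positivity
  have hKpos : 0 < K := by nlinarith
  have hK1 : 1 < K := by nlinarith
  refine ⟨K, hK1, ?_⟩
  intro Ω hopen hbdd hconv hne hcent hmom
  have hμfin : volume Ω < ⊤ := hbdd.measure_lt_top
  have hμpos : 0 < volume Ω := hopen.measure_pos volume hne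
  set Vr := (volume Ω).toReal with hVr_def
  have hVrpos : 0 < Vr := ENNReal.toReal_pos hμpos.ne' hμfin.ne
  set W := Real.sqrt Vr with hW_def
  have hWpos : 0 < W := Real.sqrt_pos.2 hVrpos
  have hW2 : W ^ 2 = Vr := Real.sq_sqrt hVrpos.le
  obtain ⟨Rb, hRb⟩ : ∃ R : ℝ, ∀ x ∈ Ω, ‖x‖ ≤ R := by
    obtain ⟨R, hR⟩ := hbdd.subset_closedBall (0 : EuclideanSpace ℝ (Fin n))
    exact ⟨R, fun x hx => by simpa [dist_zero_right] using hR hx⟩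
  set S : EuclideanSpace ℝ (Fin n) → ℝ :=
    fun u => sSup ((fun x => ⟪x, u⟫) '' Ω) with hS_def
  have hSbdd : ∀ u : EuclideanSpace ℝ (Fin n), BddAbove ((fun x => ⟪x, u⟫) '' Ω) := by
    intro u
    refine ⟨Rb * ‖u‖, ?_⟩
    rintro y ⟨x, hx, rfl⟩
    calc ⟪x, u⟫ ≤ ‖x‖ * ‖u‖ := real_inner_le_norm _ _
      _ ≤ Rb * ‖u‖ := mul_le_mul_of_nonneg_right (hRb x hx) (norm_nonneg u)
  have hle : ∀ u : EuclideanSpace ℝ (Fin n), ∀ x ∈ Ω, ⟪x, u⟫ ≤ S u :=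
    fun u x hx => le_csSup (hSbdd u) ⟨x, hx, rfl⟩
  have hex : ∀ u : EuclideanSpace ℝ (Fin n), ∀ c : ℝ, c < S u → ∃ x ∈ Ω, c < ⟪x, u⟫ := by
    intro u c hc
    obtain ⟨y, hy, hy2⟩ := exists_lt_of_lt_csSup (hne.image _) hc
    obtain ⟨x, hx, rfl⟩ := hy
    exact ⟨x, hx, hy2⟩
  have hmean : ∀ u, ∫ x in Ω, ⟪x, u⟫ ∂volume = 0 :=
    UniformBoxAux.integral_inner_eq_zero hopen hbdd hcent
  have hsq : ∀ u : EuclideanSpace ℝ (Fin n), ‖u‖ = 1 → ∫ x in Ω, ⟪x, u⟫ ^ 2 ∂volume = 1 :=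
    fun u hu => UniformBoxAux.integral_inner_sq hopen hbdd hmom hu
  have hC : ∀ u : EuclideanSpace ℝ (Fin n), ‖u‖ = 1 → 1 ≤ S u * S (-u) * Vr := by
    intro u hu
    refine UniformBoxAux.moment_lower hopen hbdd (hmean u) (hsq u hu) (hle u) ?_
    intro x hx
    have := hle (-u) x hx
    rw [inner_neg_right] at this
    linarith
  have hSpos : ∀ u : EuclideanSpace ℝ (Fin n), ‖u‖ = 1 → 0 < S u := by
    intro u hu
    by_contra h
    push_neg at h
    obtain ⟨x0, hx0⟩ := hne
    have h1 := hle u x0 hx0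
    have h2 := hle (-u) x0 hx0
    rw [inner_neg_right] at h2
    have h3 := hC u hu
    have hb0 : 0 ≤ S (-u) := by linarith
    have h5 : S u * S (-u) ≤ 0 := mul_nonpos_iff.2 (Or.inr ⟨h, hb0⟩)
    nlinarith [h5, hVrpos]
  have claim : ∀ u : EuclideanSpace ℝ (Fin n), ‖u‖ = 1 → S (-u) ≤ S u → S u ≤ s3 / W := by
    intro u hu hba
    have ha := hSpos u hu
    obtain ⟨p, hp, hp7⟩ := hex u (7/8 * S u) (by nlinarith)
    have hlowa : ∀ x ∈ Ω, -(S u) ≤ ⟪x, u⟫ := by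
      intro x hx
      have := hle (-u) x hx
      rw [inner_neg_right] at this
      linarith
    have hcb := UniformBoxAux.cone_bound hopen hbdd hconv (hsq u hu) ha hp hp7 hlowa
    have h16 : (16:ℝ) * 3^n ≤ s3^2 := by
      have h1 : (1:ℝ) ≤ 3^n := by
        calc (1:ℝ) = 1^n := (one_pow n).symm
          _ ≤ 3^n := pow_le_pow_left₀ (by norm_num) (by norm_num) n
      rw [hs3_def]
      nlinarith
    have hWa : (W * S u)^2 ≤ s3^2 := by
      have hVa : Vr * (S u)^2 ≤ s3^2 := le_trans hcb h16
      rw [← hW2] at hVa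
      rw [mul_pow]
      nlinarith
    have hWS : W * S u ≤ s3 := by
      nlinarith [hWa, mul_pos hWpos ha, hs3, sq_nonneg (W * S u - s3), sq_nonneg (W * S u + s3)]
    rw [le_div_iff₀ hWpos]
    linarith [hWS]
  have hSle : ∀ u : EuclideanSpace ℝ (Fin n), ‖u‖ = 1 → S u ≤ s3 / W := by
    intro u hu
    have hu' : ‖-u‖ = 1 := by rwa [norm_neg]
    rcases le_total (S (-u)) (S u) with h | h
    · exact claim u hu h
    · refine le_trans h (claim (-u) hu' ?_)
      rwa [neg_neg]
  have hSge : ∀ u : EuclideanSpace ℝ (Fin n), ‖u‖ = 1 → 1 / (s3 * W) ≤ S u := by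
    intro u hu
    have hu' : ‖-u‖ = 1 := by rwa [norm_neg]
    have h1 := hC u hu
    have h2 := hSle (-u) hu'
    have ha := hSpos u hu
    rw [div_le_iff₀ (by positivity : (0:ℝ) < s3 * W)]
    have h3 : S u * S (-u) * Vr ≤ S u * (s3 / W) * Vr :=
      mul_le_mul_of_nonneg_right (mul_le_mul_of_nonneg_left h2 ha.le) hVrpos.le
    have h4 : S u * (s3 / W) * Vr = S u * (s3 * W) := by
      rw [← hW2]
      field_simp
    linarith
  have houter : ∀ x ∈ Ω, ‖x‖ ≤ s3 / W := by
    intro x hx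
    rcases eq_or_ne x 0 with rfl | hx0
    · simp only [norm_zero]
      positivity
    · have hu : ‖(‖x‖⁻¹ : ℝ) • x‖ = 1 := norm_smul_inv_norm hx0
      have h1 := hle ((‖x‖⁻¹ : ℝ) • x) x hx
      have h2 : ⟪x, (‖x‖⁻¹ : ℝ) • x⟫ = ‖x‖ := by
        rw [real_inner_smul_right, real_inner_self_eq_norm_mul_norm]
        have : ‖x‖ ≠ 0 := norm_ne_zero_iff.2 hx0
        field_simp
      rw [h2] at h1
      exact h1.trans (hSle _ hu)
  have hinner : ∀ x : EuclideanSpace ℝ (Fin n), ‖x‖ < 1 / (s3 * W) → x ∈ Ω := by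
    intro x hxlt
    by_contra hxn
    obtain ⟨f, hf⟩ := geometric_hahn_banach_open_point hconv hopen hxn
    set v := (InnerProductSpace.toDual ℝ (EuclideanSpace ℝ (Fin n))).symm f with hv_def
    have hfv : ∀ y, f y = ⟪v, y⟫ := by
      intro y
      rw [hv_def]
      simp
    have hvne : v ≠ 0 := by
      intro h0
      obtain ⟨y, hy⟩ := hne
      have := hf y hy
      rw [hfv, hfv, h0] at this
      simp at this
    have hu : ‖(‖v‖⁻¹ : ℝ) • v‖ = 1 := norm_smul_inv_norm hvne
    have hvpos : 0 < ‖v‖ := norm_pos_iff.2 hvne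
    have hub : S ((‖v‖⁻¹ : ℝ) • v) ≤ ‖x‖ := by
      apply csSup_le (hne.image _)
      rintro y ⟨z, hz, rfl⟩
      dsimp only
      have h1 : f z < f x := hf z hz
      rw [hfv, hfv] at h1
      have h2 : ⟪z, (‖v‖⁻¹:ℝ) • v⟫ = ‖v‖⁻¹ * ⟪v, z⟫ := by
        rw [real_inner_smul_right, real_inner_comm]
      rw [h2]
      have h3 : ⟪v, x⟫ ≤ ‖v‖ * ‖x‖ := real_inner_le_norm _ _
      have h4 : ‖v‖⁻¹ * ⟪v, z⟫ ≤ ‖v‖⁻¹ * (‖v‖ * ‖x‖) := by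
        apply mul_le_mul_of_nonneg_left _ (inv_nonneg.2 hvpos.le)
        linarith
      calc ‖v‖⁻¹ * ⟪v, z⟫ ≤ ‖v‖⁻¹ * (‖v‖ * ‖x‖) := h4
        _ = ‖x‖ := by field_simp
    have := hSge _ hu
    linarith
  -- volume bounds
  set r0 : ℝ := 1 / (s3 * W) with hr0_def
  have hr0pos : 0 < r0 := by positivity
  have hball : ball (0 : EuclideanSpace ℝ (Fin n)) r0 ⊆ Ω := fun x hx =>
    hinner x (by rwa [mem_ball_zero_iff] at hx)
  have hcball : Ω ⊆ closedBall (0 : EuclideanSpace ℝ (Fin n)) (s3 / W) := fun x hx => by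
    rw [mem_closedBall_zero_iff]
    exact houter x hx
  have hlowV : ENNReal.ofReal (r0^n) * volume (ball (0 : EuclideanSpace ℝ (Fin n)) 1)
      ≤ volume Ω := by
    have h := Measure.addHaar_ball (volume : Measure (EuclideanSpace ℝ (Fin n)))
      (0 : EuclideanSpace ℝ (Fin n)) hr0pos.le
    rw [finrank_euclideanSpace_fin] at h
    rw [← h]
    exact measure_mono hball
  have hupV : volume Ω
      ≤ ENNReal.ofReal ((s3/W)^n) * volume (ball (0 : EuclideanSpace ℝ (Fin n)) 1) := by
    have h := Measure.addHaar_closedBall (volume : Measure (EuclideanSpace ℝ (Fin n)))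
      (0 : EuclideanSpace ℝ (Fin n)) (by positivity : (0:ℝ) ≤ s3 / W)
    rw [finrank_euclideanSpace_fin] at h
    rw [← h]
    exact measure_mono hcball
  have hlow : r0^n * ω ≤ Vr := by
    have h := (ENNReal.toReal_le_toReal
      (ENNReal.mul_ne_top ENNReal.ofReal_ne_top measure_ball_lt_top.ne) hμfin.ne).2 hlowV
    rwa [ENNReal.toReal_mul, ENNReal.toReal_ofReal (by positivity)] at h
  have hup : Vr ≤ (s3/W)^n * ω := by
    have h := (ENNReal.toReal_le_toReal hμfin.ne
      (ENNReal.mul_ne_top ENNReal.ofReal_ne_top measure_ball_lt_top.ne)).2 hupV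
    rwa [ENNReal.toReal_mul, ENNReal.toReal_ofReal (by positivity)] at h
  have hWup : W ≤ w1 := by
    rcases le_total W 1 with h | h
    · exact h.trans hw1ge
    · have e1 : W^(n+2) = Vr * W^n := by rw [← hW2]; ring
      have h1 : Vr * W^n ≤ (s3/W)^n * ω * W^n :=
        mul_le_mul_of_nonneg_right hup (by positivity)
      have hWn : (W:ℝ)^n ≠ 0 := pow_ne_zero n hWpos.ne'
      have h2 : (s3/W)^n * ω * W^n = s3^n * ω := by
        rw [div_pow]
        field_simp
      have h3 : W ≤ W^(n+2) := le_self_pow₀ h (by omega)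
      calc W ≤ W^(n+2) := h3
        _ = Vr * W^n := e1
        _ ≤ s3^n * ω := by rw [← h2]; exact h1
        _ ≤ w1 := le_max_right _ _
  have hWlo : w0 ≤ W := by
    rcases le_total 1 W with h | h
    · exact (min_le_left _ _).trans h
    · have e1 : W^(n+2) = Vr * W^n := by rw [← hW2]; ring
      have h1 : r0^n * ω * W^n ≤ Vr * W^n :=
        mul_le_mul_of_nonneg_right hlow (by positivity)
      have hWn : (W:ℝ)^n ≠ 0 := pow_ne_zero n hWpos.ne'
      have h2 : r0^n * ω * W^n = ω / s3^n := by
        rw [hr0_def, div_pow, one_pow, mul_pow]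
        field_simp
      have h3 : W^(n+2) ≤ W := pow_le_of_le_one hWpos.le h (by omega)
      have h4 : ω / s3^n ≤ W := by
        calc ω / s3^n = r0^n * ω * W^n := h2.symm
          _ ≤ Vr * W^n := h1
          _ = W^(n+2) := e1.symm
          _ ≤ W := h3
      exact (min_le_right _ _).trans h4
  constructor
  · -- inner box
    intro x hxi
    apply hinner
    have hnormle : ‖x‖ ≤ Real.sqrt n * K⁻¹ := by
      rw [EuclideanSpace.norm_eq]
      have hsum : ∑ i, ‖x i‖^2 ≤ ∑ _i : Fin n, (K⁻¹)^2 := by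
        refine Finset.sum_le_sum fun i _ => ?_
        have h1 := hxi i
        rw [Real.norm_eq_abs]
        have h0 : (0:ℝ) ≤ |x i| := abs_nonneg _
        nlinarith
      calc Real.sqrt (∑ i, ‖x i‖^2) ≤ Real.sqrt (∑ _i : Fin n, (K⁻¹)^2) :=
            Real.sqrt_le_sqrt hsum
        _ = Real.sqrt (n * (K⁻¹)^2) := by
            rw [Finset.sum_const, Finset.card_univ, Fintype.card_fin, nsmul_eq_mul]
        _ = Real.sqrt n * K⁻¹ := by
            rw [Real.sqrt_mul (by positivity), Real.sqrt_sq (by positivity)]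
    have hsn : Real.sqrt n ≤ (n:ℝ) + 1 := by
      rw [show ((n:ℝ)+1) = Real.sqrt (((n:ℝ)+1)^2) from (Real.sqrt_sq (by positivity)).symm]
      exact Real.sqrt_le_sqrt (by nlinarith)
    have hKgt : s3 * w1 * ((n:ℝ)+1) < K := by
      rw [hK_def]
      nlinarith [div_pos hs3 hw0pos]
    have hmid : ((n:ℝ)+1) * K⁻¹ < 1/(s3*w1) := by
      rw [lt_div_iff₀ (by positivity : (0:ℝ) < s3*w1)]
      have he : ((n:ℝ)+1) * K⁻¹ * (s3*w1) = (s3*w1*((n:ℝ)+1))/K := by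
        field_simp
      rw [he, div_lt_one hKpos]
      exact hKgt
    have hlast : 1/(s3*w1) ≤ 1/(s3*W) := by
      apply one_div_le_one_div_of_le (by positivity)
      exact mul_le_mul_of_nonneg_left hWup hs3.le
    calc ‖x‖ ≤ Real.sqrt n * K⁻¹ := hnormle
      _ ≤ ((n:ℝ)+1) * K⁻¹ := mul_le_mul_of_nonneg_right hsn (by positivity)
      _ < 1/(s3*w1) := hmid
      _ ≤ 1/(s3*W) := hlast
  · -- outer box
    intro x hx i
    have h1 : |x i| ≤ ‖x‖ := by
      rw [EuclideanSpace.norm_eq]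
      rw [show |x i| = Real.sqrt (‖x i‖^2) by
        rw [Real.norm_eq_abs, sq_abs, Real.sqrt_sq_eq_abs]]
      apply Real.sqrt_le_sqrt
      exact Finset.single_le_sum (f := fun j => ‖x j‖^2) (fun j _ => sq_nonneg _)
        (Finset.mem_univ i)
    have h2 : ‖x‖ ≤ s3/W := houter x hx
    have h3 : s3/W ≤ s3/w0 := div_le_div_of_nonneg_left hs3.le hw0pos hWlo
    have h4 : s3/w0 ≤ K := by nlinarith
    linarith
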